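/- Let X be Polish, μ0 a Borel probability measure, and H^∞ a linear subspace of C_b(X) containing the constant functions which satisfies part (b) of Condition (D): for every ε > 0 and Borel probability measure μ there exist h″ ∈ H^∞ and a compact K ⊆ X with 1_{K^c} ≤ h″ and ∫ h″ dμ ≤ ε. Then the functional φ^∞(f) = inf{∫ h dμ0 : h ∈ H^∞, h ≥ f} is continuous from above on C_b(X): φ^∞(f_n) ↓ 0 for every sequence (f_n) in C_b(X) with f_n ↓ 0 pointwise. -/

import Mathlib

open MeasureTheory BoundedContinuousFunction Filter Topology

/-- The superhedging functional `φ(f) = inf {∫ h dμ0 : h ∈ H, h ≥ f}`. -/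
noncomputable def phi {X : Type*} [TopologicalSpace X] [MeasurableSpace X]
    (μ0 : Measure X) (H : Set (X →ᵇ ℝ)) (f : X →ᵇ ℝ) : ℝ :=
  sInf {r : ℝ | ∃ h ∈ H, (∀ x, f x ≤ h x) ∧ r = ∫ x, h x ∂μ0}

/-- If `H^∞ ⊆ C_b(X)` is a linear subspace containing the constants and
satisfying part (b) of Condition (D), then `φ^∞` is continuous from above:
`φ^∞(f_n) ↓ 0` for every sequence `f_n ↓ 0` pointwise in `C_b(X)`. -/
theorem statement10 {X : Type*} [TopologicalSpace X] [PolishSpace X]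
    [MeasurableSpace X] [BorelSpace X]
    (μ0 : Measure X) [IsProbabilityMeasure μ0]
    (Hinf : Set (X →ᵇ ℝ))
    (hadd : ∀ g ∈ Hinf, ∀ h ∈ Hinf, g + h ∈ Hinf)
    (hsmul : ∀ c : ℝ, ∀ h ∈ Hinf, c • h ∈ Hinf)
    (hconst : ∀ c : ℝ, BoundedContinuousFunction.const X c ∈ Hinf)
    (hD2 : ∀ ε > (0 : ℝ), ∀ μ : Measure X, IsProbabilityMeasure μ →
      ∃ h'' ∈ Hinf, ∃ K : Set X, IsCompact K ∧
        (∀ x, Kᶜ.indicator (fun _ => (1 : ℝ)) x ≤ h'' x) ∧ ∫ x, h'' x ∂μ ≤ ε) :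
    ∀ fn : ℕ → X →ᵇ ℝ, (∀ x, Antitone (fun n => fn n x)) →
      (∀ x, Tendsto (fun n => fn n x) atTop (𝓝 (0 : ℝ))) →
      Antitone (fun n => phi μ0 Hinf (fn n)) ∧
        Tendsto (fun n => phi μ0 Hinf (fn n)) atTop (𝓝 (0 : ℝ)) := by
  intro fn hanti htend
  set S : ℕ → Set ℝ :=
    fun n => {r : ℝ | ∃ h ∈ Hinf, (∀ x, fn n x ≤ h x) ∧ r = ∫ x, h x ∂μ0} with hS
  -- each fn n is nonnegative
  have hfn0 : ∀ n x, 0 ≤ fn n x := by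
    intro n x
    refine le_of_tendsto (htend x) (eventually_atTop.2 ⟨n, fun m hm => hanti x hm⟩)
  -- S n is bounded below by 0
  have hbdd : ∀ n, BddBelow (S n) := by
    intro n
    refine ⟨0, ?_⟩
    rintro r ⟨h, _, hle, rfl⟩
    exact integral_nonneg fun x => le_trans (hfn0 n x) (hle x)
  -- S n is nonempty
  have hne : ∀ n, (S n).Nonempty := by
    intro n
    refine ⟨∫ x, (BoundedContinuousFunction.const X ‖fn n‖) x ∂μ0,
      BoundedContinuousFunction.const X ‖fn n‖, hconst _, fun x => ?_, rfl⟩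
    exact le_trans (le_abs_self _) ((fn n).norm_coe_le_norm x)
  -- antitonicity of phi ∘ fn
  have hmono : Antitone (fun n => phi μ0 Hinf (fn n)) := by
    intro m n hmn
    refine csInf_le_csInf (hbdd n) (hne m) ?_
    rintro r ⟨h, hH, hle, rfl⟩
    exact ⟨h, hH, fun x => le_trans (hanti x hmn) (hle x), rfl⟩
  have hphi0 : ∀ n, 0 ≤ phi μ0 Hinf (fn n) := by
    intro n
    refine le_csInf (hne n) ?_
    rintro r ⟨h, _, hle, rfl⟩
    exact integral_nonneg fun x => le_trans (hfn0 n x) (hle x)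
  refine ⟨hmono, ?_⟩
  -- key upper bound
  have key : ∀ ε > (0 : ℝ), ∃ N : ℕ, ∀ n ≥ N,
      phi μ0 Hinf (fn n) ≤ ε * (1 + ‖fn 0‖) := by
    intro ε hε
    obtain ⟨h'', hH'', K, hK, hind, hint⟩ := hD2 ε hε μ0 inferInstance
    have hh0 : ∀ x, 0 ≤ h'' x := by
      intro x
      refine le_trans ?_ (hind x)
      exact Set.indicator_nonneg (fun _ _ => zero_le_one) x
    have hh1 : ∀ x ∉ K, (1 : ℝ) ≤ h'' x := by
      intro x hx
      have := hind x
      rwa [Set.indicator_of_mem (by simpa using hx)] at this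
    -- Dini-type step on compact K
    have hcover : K ⊆ ⋃ n : ℕ, {x | fn n x < ε} := by
      intro x _
      obtain ⟨n, hn⟩ := ((htend x).eventually (gt_mem_nhds hε)).exists
      exact Set.mem_iUnion.2 ⟨n, hn⟩
    obtain ⟨s, hs⟩ := hK.elim_finite_subcover (fun n => {x | fn n x < ε})
      (fun n => isOpen_lt (fn n).continuous continuous_const) hcover
    set N := s.sup id with hN
    have hdini : ∀ n ≥ N, ∀ x ∈ K, fn n x ≤ ε := by
      intro n hn x hx
      obtain ⟨i, hi, hxi⟩ := Set.mem_iUnion₂.1 (hs hx)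
      have hiN : i ≤ n := le_trans (Finset.le_sup (f := id) hi) hn
      exact le_of_lt (lt_of_le_of_lt (hanti x hiN) hxi)
    set M := ‖fn 0‖ with hM
    have hM0 : 0 ≤ M := norm_nonneg _
    refine ⟨N, fun n hn => ?_⟩
    set g : X →ᵇ ℝ := BoundedContinuousFunction.const X ε + M • h'' with hg
    have hgH : g ∈ Hinf := hadd _ (hconst ε) _ (hsmul M _ hH'')
    have hle : ∀ x, fn n x ≤ g x := by
      intro x
      have hgx : g x = ε + M * h'' x := rfl
      by_cases hx : x ∈ K
      · have := hdini n hn x hx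
        rw [hgx]
        nlinarith [hh0 x]
      · have h1 : fn n x ≤ M := by
          refine le_trans (hanti x (Nat.zero_le n)) ?_
          exact le_trans (le_abs_self _) ((fn 0).norm_coe_le_norm x)
        have h2 : (1 : ℝ) ≤ h'' x := hh1 x hx
        rw [hgx]
        nlinarith
    have hgint : ∫ x, g x ∂μ0 ≤ ε * (1 + M) := by
      have : ∫ x, g x ∂μ0 = ε + M * ∫ x, h'' x ∂μ0 := by
        rw [hg]
        calc ∫ x, ((BoundedContinuousFunction.const X ε + M • h'') x) ∂μ0
            = ∫ x, (ε + M * h'' x) ∂μ0 := rfl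
          _ = ∫ x, (ε : ℝ) ∂μ0 + ∫ x, M * h'' x ∂μ0 := by
              refine integral_add (integrable_const ε) ?_
              simpa using (M • h'').integrable μ0
          _ = ε + M * ∫ x, h'' x ∂μ0 := by
              rw [integral_const, integral_const_mul]
              simp
      rw [this]
      nlinarith [hint]
    calc phi μ0 Hinf (fn n) ≤ ∫ x, g x ∂μ0 :=
          csInf_le (hbdd n) ⟨g, hgH, hle, rfl⟩
      _ ≤ ε * (1 + M) := hgint
  -- conclude convergence
  rw [Metric.tendsto_atTop]
  intro ε hε
  set M := ‖fn 0‖ with hM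
  have hM0 : 0 ≤ M := norm_nonneg _
  have hδ : (0 : ℝ) < ε / (2 * (1 + M)) := by positivity
  obtain ⟨N, hN⟩ := key _ hδ
  refine ⟨N, fun n hn => ?_⟩
  have h1 := hN n hn
  have h2 := hphi0 n
  rw [Real.dist_eq, sub_zero, abs_of_nonneg h2]
  have : ε / (2 * (1 + M)) * (1 + M) = ε / 2 := by
    field_simp
  rw [this] at h1
  linarith
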